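/- For any indices 0 ≤ a ≤ b ≤ n, the endomorphism ring of the interval module I[a,b] (in the category of persistence modules of length n over a field k) is isomorphic as a k-algebra to k; in particular, I[a,b] is an indecomposable persistence module, i.e., it is not isomorphic to a direct sum of two nonzero persistence modules. -/

import Mathlib

/-!
STATEMENT 2: For any indices `0 ≤ a ≤ b ≤ n`, the endomorphism ring of the interval
module `I[a,b]` (in the category of persistence modules of length `n` over a field `k`)
is isomorphic as a `k`-algebra to `k`; in particular, `I[a,b]` is an indecomposable
persistence module, i.e. it is not isomorphic to a direct sum of two nonzero
persistence modules.

An endomorphism of `I[a,b]` is a family of linear endomorphisms of its spaces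
commuting with the structure maps; these form a `k`-subalgebra of the product of the
endomorphism algebras of the individual spaces, with multiplication given by
composition.
-/

/-- The `i`-th space of the interval module `I[a,b]`, realized as a submodule of `k`:
it is all of `k` (i.e. `⊤`) for `a ≤ i ≤ b` and the zero submodule otherwise. -/
def intervalSubmodule (k : Type*) [Field k] (a b i : ℕ) : Submodule k k :=
  if a ≤ i ∧ i ≤ b then ⊤ else ⊥

open Classical in
/-- The structure map of the interval module `I[a,b]` from index `i` to index `j`:
the (identity-like) inclusion whenever it exists, and zero otherwise.  For `j = i + 1`
this is the identity of `k` when `a ≤ i < b` (both spaces being `⊤`) and zero otherwise. -/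
noncomputable def intervalStep (k : Type*) [Field k] (a b i j : ℕ) :
    intervalSubmodule k a b i →ₗ[k] intervalSubmodule k a b j :=
  if h : intervalSubmodule k a b i ≤ intervalSubmodule k a b j then Submodule.inclusion h
  else 0

/-- The endomorphism ring of the interval module `I[a,b]`, as the `k`-subalgebra of
`∀ i, End (I[a,b]_i)` consisting of those families of endomorphisms that commute with
the structure maps of `I[a,b]` (i.e. natural transformations `I[a,b] ⟶ I[a,b]`). -/
noncomputable def intervalEnd (k : Type*) [Field k] (n a b : ℕ) :
    Subalgebra k (∀ i : Fin (n + 1), Module.End k (intervalSubmodule k a b (i : ℕ))) where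
  carrier := {η | ∀ i : Fin n,
    (η i.succ).comp (intervalStep k a b (i : ℕ) ((i : ℕ) + 1)) =
      (intervalStep k a b (i : ℕ) ((i : ℕ) + 1)).comp (η i.castSucc)}
  mul_mem' := by
    intro η ξ hη hξ i
    have h1 := hη i
    have h2 := hξ i
    simp only [Pi.mul_apply, Module.End.mul_eq_comp, LinearMap.comp_assoc, h2] at *
    rw [← LinearMap.comp_assoc, h1, LinearMap.comp_assoc]
  one_mem' := by
    intro i
    simp only [Pi.one_apply, Module.End.one_eq_id, LinearMap.id_comp, LinearMap.comp_id]
  add_mem' := by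
    intro η ξ hη hξ i
    simp only [Pi.add_apply, LinearMap.add_comp, LinearMap.comp_add, hη i, hξ i]
  zero_mem' := by
    intro i
    simp only [Pi.zero_apply, LinearMap.zero_comp, LinearMap.comp_zero]
  algebraMap_mem' := by
    intro c i
    ext v
    simp [Module.algebraMap_end_apply, Pi.algebraMap_apply, map_smul]

section Helpers

variable (k : Type*) [Field k]

lemma one_mem_interval {a b m : ℕ} (h1 : a ≤ m) (h2 : m ≤ b) :
    (1 : k) ∈ intervalSubmodule k a b m := by
  simp [intervalSubmodule, h1, h2]

lemma interval_eq_top {a b m : ℕ} (h1 : a ≤ m) (h2 : m ≤ b) :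
    intervalSubmodule k a b m = ⊤ := by simp [intervalSubmodule, h1, h2]

lemma interval_eq_bot {a b m : ℕ} (h : ¬ (a ≤ m ∧ m ≤ b)) :
    intervalSubmodule k a b m = ⊥ := by simp [intervalSubmodule, h]

lemma interval_subsingleton {a b m : ℕ} (h : ¬ (a ≤ m ∧ m ≤ b)) :
    Subsingleton (intervalSubmodule k a b m) := by
  constructor
  intro x y
  ext
  have hb := interval_eq_bot k (a:=a) (b:=b) (m:=m) h
  have hx : (x : k) ∈ (⊥ : Submodule k k) := hb.le x.2
  have hy : (y : k) ∈ (⊥ : Submodule k k) := hb.le y.2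
  rw [Submodule.mem_bot] at hx hy
  rw [hx, hy]

lemma intervalStep_coe {a b m j : ℕ} (h1 : a ≤ m) (h2 : m ≤ b) (h3 : a ≤ j) (h4 : j ≤ b)
    (v : intervalSubmodule k a b m) :
    ((intervalStep k a b m j v : k)) = (v : k) := by
  have hle : intervalSubmodule k a b m ≤ intervalSubmodule k a b j := by
    rw [interval_eq_top k h1 h2, interval_eq_top k h3 h4]
  rw [intervalStep, dif_pos hle]
  rfl

lemma interval_smul_one {a b m : ℕ} (h1 : a ≤ m) (h2 : m ≤ b)
    (v : intervalSubmodule k a b m) :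
    v = (v : k) • (⟨1, one_mem_interval k h1 h2⟩ : intervalSubmodule k a b m) := by
  ext
  simp

end Helpers
section Part1

variable (k : Type*) [Field k]

lemma end_apply_eq {a b m : ℕ} (h1 : a ≤ m) (h2 : m ≤ b)
    (f : Module.End k (intervalSubmodule k a b m)) (v : intervalSubmodule k a b m) :
    ((f v : intervalSubmodule k a b m) : k) =
      (v : k) * ((f ⟨1, one_mem_interval k h1 h2⟩ : intervalSubmodule k a b m) : k) := by
  conv_lhs => rw [interval_smul_one k h1 h2 v, map_smul]
  simp [smul_eq_mul]

lemma eta_const {n a b : ℕ} (hab : a ≤ b) (hbn : b ≤ n)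
    (η : ∀ i : Fin (n + 1), Module.End k (intervalSubmodule k a b (i : ℕ)))
    (hη : η ∈ intervalEnd k n a b) :
    ∀ m (h1 : a ≤ m) (h2 : m ≤ b),
      ((η ⟨m, by omega⟩ ⟨1, one_mem_interval k h1 h2⟩ : intervalSubmodule k a b m) : k) =
      ((η ⟨a, by omega⟩ ⟨1, one_mem_interval k le_rfl hab⟩ : intervalSubmodule k a b a) : k) := by
  intro m h1 h2
  induction m, h1 using Nat.le_induction with
  | base => rfl
  | succ m hm ih =>
    have hmb : m ≤ b := by omega
    set fm : Fin n := ⟨m, by omega⟩ with hfm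
    have hcomm : (η fm.succ) (intervalStep k a b m (m + 1)
          (⟨1, one_mem_interval k hm hmb⟩ : intervalSubmodule k a b m)) =
        intervalStep k a b m (m + 1)
          ((η fm.castSucc) ⟨1, one_mem_interval k hm hmb⟩) :=
      LinearMap.congr_fun (hη fm) ⟨1, one_mem_interval k hm hmb⟩
    have hstep : intervalStep k a b m (m + 1) (⟨1, one_mem_interval k hm hmb⟩ :
        intervalSubmodule k a b m) = ⟨1, one_mem_interval k (by omega) h2⟩ := by
      apply Subtype.ext
      rw [intervalStep_coe k hm hmb (by omega) h2]
    rw [hstep] at hcomm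
    have hval := congrArg Subtype.val hcomm
    rw [intervalStep_coe k hm hmb (by omega) h2] at hval
    exact hval.trans (ih hmb)

noncomputable def toScalar (n a b : ℕ) (hab : a ≤ b) (hbn : b ≤ n) :
    intervalEnd k n a b →ₐ[k] k where
  toFun η := ((η.1 ⟨a, by omega⟩ ⟨1, one_mem_interval k le_rfl hab⟩ :
      intervalSubmodule k a b a) : k)
  map_one' := by simp
  map_mul' η ξ := by
    have h := end_apply_eq k (a := a) (b := b) le_rfl hab
      (η.1 ⟨a, by omega⟩) (ξ.1 ⟨a, by omega⟩ ⟨1, one_mem_interval k le_rfl hab⟩)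
    simp only [Subalgebra.coe_mul, Pi.mul_apply, Module.End.mul_apply]
    rw [h, mul_comm]
  map_zero' := by simp
  map_add' η ξ := by simp
  commutes' c := by
    show (((algebraMap k (∀ i : Fin (n + 1),
        Module.End k (intervalSubmodule k a b (i : ℕ))) c) ⟨a, by omega⟩
        ⟨1, one_mem_interval k le_rfl hab⟩ : intervalSubmodule k a b a) : k) = c
    simp [Module.algebraMap_end_apply]

lemma toScalar_bijective (n a b : ℕ) (hab : a ≤ b) (hbn : b ≤ n) :
    Function.Bijective (toScalar k n a b hab hbn) := by
  constructor
  · intro η ξ hval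
    apply Subtype.ext
    funext i
    by_cases hi : a ≤ (i : ℕ) ∧ (i : ℕ) ≤ b
    · apply LinearMap.ext
      intro v
      apply Subtype.ext
      rw [end_apply_eq k hi.1 hi.2 (η.1 i) v, end_apply_eq k hi.1 hi.2 (ξ.1 i) v]
      congr 1
      have e1 := eta_const k hab hbn η.1 η.2 (i : ℕ) hi.1 hi.2
      have e2 := eta_const k hab hbn ξ.1 ξ.2 (i : ℕ) hi.1 hi.2
      exact e1.trans (hval.trans e2.symm)
    · haveI := interval_subsingleton k (a := a) (b := b) (m := (i : ℕ)) hi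
      apply LinearMap.ext
      intro v
      rw [Subsingleton.elim v 0]
      simp
  · intro c
    exact ⟨algebraMap k _ c, (toScalar k n a b hab hbn).commutes c⟩

end Part1
section Part2

lemma not_both_nontrivial {k : Type} [Field k] {a b m : ℕ} (_h1 : a ≤ m) (_h2 : m ≤ b)
    {M N : Type} [AddCommGroup M] [Module k M] [AddCommGroup N] [Module k N]
    (e : intervalSubmodule k a b m ≃ₗ[k] M × N)
    (hM : Nontrivial M) (hN : Nontrivial N) : False := by
  obtain ⟨x, hx⟩ := exists_ne (0 : M)
  obtain ⟨y, hy⟩ := exists_ne (0 : N)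
  set u := e.symm (x, 0) with hu
  set w := e.symm (0, y) with hw
  have hu0 : u ≠ 0 := by
    intro h
    apply hx
    have := congrArg e h
    rw [e.apply_symm_apply, map_zero] at this
    exact congrArg Prod.fst this
  have huk : (u : k) ≠ 0 := fun h => hu0 (Subtype.ext h)
  have hwc : w = ((w : k) * (u : k)⁻¹) • u := by
    apply Subtype.ext
    rw [Submodule.coe_smul, smul_eq_mul, mul_assoc, inv_mul_cancel₀ huk, mul_one]
  have := congrArg e hwc
  rw [e.apply_symm_apply, map_smul, e.apply_symm_apply] at this
  have hsnd := congrArg Prod.snd this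
  simp only [Prod.smul_snd, smul_zero] at hsnd
  exact hy hsnd

lemma transport_snd {k : Type} [Field k] {n a b : ℕ}
    {A B : Fin (n + 1) → Type}
    [∀ i, AddCommGroup (A i)] [∀ i, Module k (A i)]
    [∀ i, AddCommGroup (B i)] [∀ i, Module k (B i)]
    (φA : ∀ i : Fin n, A i.castSucc →ₗ[k] A i.succ)
    (φB : ∀ i : Fin n, B i.castSucc →ₗ[k] B i.succ)
    (e : ∀ i : Fin (n + 1), intervalSubmodule k a b (i : ℕ) ≃ₗ[k] A i × B i)
    (hc : ∀ (i : Fin n) (v : intervalSubmodule k a b (i : ℕ)),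
        e i.succ (intervalStep k a b (i : ℕ) ((i : ℕ) + 1) v) =
          LinearMap.prodMap (φA i) (φB i) (e i.castSucc v))
    (hbn : b ≤ n) (i : ℕ) (hai : a ≤ i) :
    ∀ m (him : i ≤ m) (hmb : m ≤ b),
      (e ⟨i, by omega⟩ ⟨1, one_mem_interval k hai (le_trans him hmb)⟩).2 = 0 →
      (e ⟨m, by omega⟩ ⟨1, one_mem_interval k (le_trans hai him) hmb⟩).2 = 0 := by
  intro m him hmb
  induction m, him using Nat.le_induction with
  | base => exact fun h => h
  | succ m hm ih =>
    intro h0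
    have hmb' : m ≤ b := by omega
    have h2 := ih hmb' h0
    set fm : Fin n := ⟨m, by omega⟩ with hfm
    have hstep : intervalStep k a b m (m + 1)
        (⟨1, one_mem_interval k (le_trans hai hm) hmb'⟩ : intervalSubmodule k a b m) =
        ⟨1, one_mem_interval k (by omega) hmb⟩ := by
      apply Subtype.ext
      rw [intervalStep_coe k (le_trans hai hm) hmb' (by omega) hmb]
    have hcm := hc fm ⟨1, one_mem_interval k (le_trans hai hm) hmb'⟩
    rw [hstep] at hcm
    have hsnd := congrArg Prod.snd hcm
    simp only [LinearMap.prodMap_apply] at hsnd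
    have hB : ((e fm.castSucc) (⟨1, one_mem_interval k (le_trans hai hm) hmb'⟩ :
        intervalSubmodule k a b ((fm.castSucc : Fin (n + 1)) : ℕ))).2 = 0 := h2
    rw [hB, map_zero] at hsnd
    exact hsnd

end Part2
/-- **The interval module has endomorphism algebra `k` and is indecomposable.**
For `a ≤ b ≤ n`, the endomorphism ring of the interval module `I[a,b]` is isomorphic
as a `k`-algebra to `k`, and `I[a,b]` is not isomorphic (as a persistence module of
length `n`) to a direct sum of two nonzero persistence modules. -/
theorem interval_module_end_eq_k_and_indecomposable
    (k : Type) [Field k] (n a b : ℕ) (hab : a ≤ b) (hbn : b ≤ n) :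
    Nonempty ((intervalEnd k n a b) ≃ₐ[k] k) ∧
    ¬ ∃ (A B : Fin (n + 1) → Type)
        (_ : ∀ i, AddCommGroup (A i)) (_ : ∀ i, Module k (A i))
        (_ : ∀ i, AddCommGroup (B i)) (_ : ∀ i, Module k (B i))
        (φA : ∀ i : Fin n, A i.castSucc →ₗ[k] A i.succ)
        (φB : ∀ i : Fin n, B i.castSucc →ₗ[k] B i.succ)
        (e : ∀ i : Fin (n + 1), intervalSubmodule k a b (i : ℕ) ≃ₗ[k] A i × B i),
      (∃ i, Nontrivial (A i)) ∧ (∃ i, Nontrivial (B i)) ∧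
      ∀ (i : Fin n) (v : intervalSubmodule k a b (i : ℕ)),
        e i.succ (intervalStep k a b (i : ℕ) ((i : ℕ) + 1) v) =
          LinearMap.prodMap (φA i) (φB i) (e i.castSucc v) := by
  constructor
  · exact ⟨AlgEquiv.ofBijective (toScalar k n a b hab hbn) (toScalar_bijective k n a b hab hbn)⟩
  · rintro ⟨A, B, iA, mA, iB, mB, φA, φB, e, ⟨i, hAi⟩, ⟨j, hBj⟩, hc⟩
    letI := iA; letI := mA; letI := iB; letI := mB
    -- both witnesses must lie in the interval
    have hir : a ≤ (i : ℕ) ∧ (i : ℕ) ≤ b := by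
      by_contra h
      haveI := interval_subsingleton k (a := a) (b := b) (m := (i : ℕ)) h
      haveI : Subsingleton (A i × B i) := (e i).toEquiv.symm.subsingleton
      haveI : Subsingleton (A i) :=
        ⟨fun x y => congrArg Prod.fst (Subsingleton.elim (x, (0 : B i)) (y, 0))⟩
      obtain ⟨x, y, hxy⟩ := hAi
      exact hxy (Subsingleton.elim x y)
    have hjr : a ≤ (j : ℕ) ∧ (j : ℕ) ≤ b := by
      by_contra h
      haveI := interval_subsingleton k (a := a) (b := b) (m := (j : ℕ)) h
      haveI : Subsingleton (A j × B j) := (e j).toEquiv.symm.subsingleton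
      haveI : Subsingleton (B j) :=
        ⟨fun x y => congrArg Prod.snd (Subsingleton.elim ((0 : A j), x) (0, y))⟩
      obtain ⟨x, y, hxy⟩ := hBj
      exact hxy (Subsingleton.elim x y)
    -- the complementary factor at each witness index is trivial
    have hBi : Subsingleton (B i) := by
      by_contra h
      exact not_both_nontrivial hir.1 hir.2 (e i) hAi (not_subsingleton_iff_nontrivial.mp h)
    have hAj : Subsingleton (A j) := by
      by_contra h
      exact not_both_nontrivial hjr.1 hjr.2 (e j) (not_subsingleton_iff_nontrivial.mp h) hBj
    rcases le_total (i : ℕ) (j : ℕ) with hij | hji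
    · -- transport the vanishing of the B-component from i to j
      have h0 : (e ⟨(i : ℕ), by omega⟩
          ⟨1, one_mem_interval k hir.1 (le_trans hij hjr.2)⟩).2 = 0 :=
        @Subsingleton.elim _ hBi _ _
      have h1 := transport_snd φA φB e hc hbn (i : ℕ) hir.1 (j : ℕ) hij hjr.2 h0
      have hfst : (e ⟨(j : ℕ), by omega⟩
          ⟨1, one_mem_interval k (le_trans hir.1 hij) hjr.2⟩).1 = 0 :=
        @Subsingleton.elim _ hAj _ _
      have hez : e ⟨(j : ℕ), by omega⟩
          ⟨1, one_mem_interval k (le_trans hir.1 hij) hjr.2⟩ = 0 := by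
        refine Prod.ext ?_ ?_
        · simpa using hfst
        · simpa using h1
      have h10 : (⟨1, one_mem_interval k (le_trans hir.1 hij) hjr.2⟩ :
          intervalSubmodule k a b (j : ℕ)) = 0 :=
        (LinearEquiv.map_eq_zero_iff _).mp hez
      exact one_ne_zero (congrArg Subtype.val h10)
    · -- symmetric argument with the factors swapped
      set e' : ∀ m : Fin (n + 1), intervalSubmodule k a b (m : ℕ) ≃ₗ[k] B m × A m :=
        fun m => (e m).trans (LinearEquiv.prodComm k (A m) (B m)) with he'
      have hc' : ∀ (m : Fin n) (v : intervalSubmodule k a b (m : ℕ)),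
          e' m.succ (intervalStep k a b (m : ℕ) ((m : ℕ) + 1) v) =
            LinearMap.prodMap (φB m) (φA m) (e' m.castSucc v) := by
        intro m v
        simp only [he', LinearEquiv.trans_apply, hc m v, LinearEquiv.prodComm_apply,
          LinearMap.prodMap_apply, Prod.swap]
      have h0 : (e' ⟨(j : ℕ), by omega⟩
          ⟨1, one_mem_interval k hjr.1 (le_trans hji hir.2)⟩).2 = 0 :=
        @Subsingleton.elim _ hAj _ _
      have h1 := transport_snd φB φA e' hc' hbn (j : ℕ) hjr.1 (i : ℕ) hji hir.2 h0
      have hfst : (e' ⟨(i : ℕ), by omega⟩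
          ⟨1, one_mem_interval k (le_trans hjr.1 hji) hir.2⟩).1 = 0 :=
        @Subsingleton.elim _ hBi _ _
      have hez : e' ⟨(i : ℕ), by omega⟩
          ⟨1, one_mem_interval k (le_trans hjr.1 hji) hir.2⟩ = 0 := by
        refine Prod.ext ?_ ?_
        · simpa using hfst
        · simpa using h1
      have h10 : (⟨1, one_mem_interval k (le_trans hjr.1 hji) hir.2⟩ :
          intervalSubmodule k a b (i : ℕ)) = 0 :=
        (LinearEquiv.map_eq_zero_iff _).mp hez
      exact one_ne_zero (congrArg Subtype.val h10)
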